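/- arXiv:0907.1297 — 3 statements merged into one kernel-verified Lean document; each statement's English description precedes it below -/
import Mathlib

section
/- For all nonnegative integers a, b, c, the triple sum ∑_{p=0}^{a} ∑_{q=0}^{b} ∑_{r=0}^{c} 2^{a+b+c−p−q−r} · C(a,p) · C(b,q) · C(c,r) · [(p+2)(q+2)(r+2) − (p+1)(q+1)(r+1)] equals 3^{a+b+c−3} · [(a+6)(b+6)(c+6) − (a+3)(b+3)(c+3)]. -/
open Finset

lemma key_sum (n : ℕ) : ∀ t : ℚ,
    ∑ p ∈ Finset.range (n + 1), (2 : ℚ) ^ (n - p) * (n.choose p) * ((p : ℚ) + t)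
      = 3 ^ n * ((n : ℚ) + 3 * t) / 3 := by
  induction n with
  | zero => intro t; simp
  | succ a ih =>
    intro t
    rw [Finset.sum_range_succ']
    have hsplit : ∀ p ∈ Finset.range (a + 1),
        (2 : ℚ) ^ (a + 1 - (p + 1)) * ((a + 1).choose (p + 1)) * (((p : ℕ) + 1 : ℕ) + t)
          = 2 ^ (a - p) * (a.choose p) * ((p : ℚ) + (t + 1))
            + 2 ^ (a - p) * (a.choose (p + 1)) * (((p : ℚ) + 1) + t) := by
      intro p hp
      rw [Nat.succ_sub_succ, Nat.choose_succ_succ]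
      push_cast
      ring
    rw [Finset.sum_congr rfl hsplit, Finset.sum_add_distrib, ih (t + 1)]
    -- now handle T = ∑ 2^(a-p) * C(a,p+1) * (p+1+t)
    have e1 := Finset.sum_range_succ' (fun p => (2 : ℚ) ^ (a + 1 - p) * (a.choose p) * ((p : ℚ) + t)) (a + 1)
    have e2 := Finset.sum_range_succ (fun p => (2 : ℚ) ^ (a + 1 - p) * (a.choose p) * ((p : ℚ) + t)) (a + 1)
    simp only [Nat.succ_sub_succ, Nat.choose_self, Nat.choose_succ_self, Nat.sub_self] at e1 e2
    have e3 : ∑ p ∈ Finset.range (a + 1), (2 : ℚ) ^ (a + 1 - p) * (a.choose p) * ((p : ℚ) + t)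
        = 2 * ∑ p ∈ Finset.range (a + 1), (2 : ℚ) ^ (a - p) * (a.choose p) * ((p : ℚ) + t) := by
      rw [Finset.mul_sum]
      refine Finset.sum_congr rfl fun p hp => ?_
      have hp' : p ≤ a := Nat.lt_succ_iff.mp (Finset.mem_range.mp hp)
      rw [show a + 1 - p = (a - p) + 1 from by omega, pow_succ]
      ring
    have eT : ∑ p ∈ Finset.range (a + 1), (2 : ℚ) ^ (a - p) * (a.choose (p + 1)) * (((p : ℚ) + 1) + t)
        = 2 * ∑ p ∈ Finset.range (a + 1), (2 : ℚ) ^ (a - p) * (a.choose p) * ((p : ℚ) + t)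
          - 2 ^ (a + 1) * t := by
      have := e1
      rw [e2] at this
      simp only [Nat.choose_zero_right, Nat.cast_one, Nat.cast_zero] at this
      push_cast at this
      rw [e3] at this
      -- this : 2*S + 0 = ∑ f(p+1) + 2^(a+1)*1*(0+t)
      linarith [this]
    rw [ih t] at eT
    rw [eT]
    simp only [Nat.choose_zero_right, Nat.cast_one]
    push_cast
    ring

theorem nosegay_rank (a b c : ℕ) :
    ∑ p ∈ Finset.range (a + 1), ∑ q ∈ Finset.range (b + 1), ∑ r ∈ Finset.range (c + 1),
      (2 : ℚ) ^ (a + b + c - p - q - r) * (a.choose p) * (b.choose q) * (c.choose r) *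
        (((p : ℚ) + 2) * (q + 2) * (r + 2) - ((p : ℚ) + 1) * (q + 1) * (r + 1))
    = (3 : ℚ) ^ (a + b + c) / 27 *
        (((a : ℚ) + 6) * (b + 6) * (c + 6) - ((a : ℚ) + 3) * (b + 3) * (c + 3)) := by
  have hfac : ∑ p ∈ Finset.range (a + 1), ∑ q ∈ Finset.range (b + 1), ∑ r ∈ Finset.range (c + 1),
      (2 : ℚ) ^ (a + b + c - p - q - r) * (a.choose p) * (b.choose q) * (c.choose r) *
        (((p : ℚ) + 2) * (q + 2) * (r + 2) - ((p : ℚ) + 1) * (q + 1) * (r + 1))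
      = (∑ p ∈ Finset.range (a + 1), (2 : ℚ) ^ (a - p) * (a.choose p) * ((p : ℚ) + 2))
        * (∑ q ∈ Finset.range (b + 1), (2 : ℚ) ^ (b - q) * (b.choose q) * ((q : ℚ) + 2))
        * (∑ r ∈ Finset.range (c + 1), (2 : ℚ) ^ (c - r) * (c.choose r) * ((r : ℚ) + 2))
        - (∑ p ∈ Finset.range (a + 1), (2 : ℚ) ^ (a - p) * (a.choose p) * ((p : ℚ) + 1))
          * (∑ q ∈ Finset.range (b + 1), (2 : ℚ) ^ (b - q) * (b.choose q) * ((q : ℚ) + 1))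
          * (∑ r ∈ Finset.range (c + 1), (2 : ℚ) ^ (c - r) * (c.choose r) * ((r : ℚ) + 1)) := by
    have step1 : ∑ p ∈ Finset.range (a + 1), ∑ q ∈ Finset.range (b + 1), ∑ r ∈ Finset.range (c + 1),
        (2 : ℚ) ^ (a + b + c - p - q - r) * (a.choose p) * (b.choose q) * (c.choose r) *
          (((p : ℚ) + 2) * (q + 2) * (r + 2) - ((p : ℚ) + 1) * (q + 1) * (r + 1))
        = ∑ p ∈ Finset.range (a + 1), ∑ q ∈ Finset.range (b + 1), ∑ r ∈ Finset.range (c + 1),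
          (((2 : ℚ) ^ (a - p) * (a.choose p) * ((p : ℚ) + 2)) * ((2 : ℚ) ^ (b - q) * (b.choose q) * ((q : ℚ) + 2))
              * ((2 : ℚ) ^ (c - r) * (c.choose r) * ((r : ℚ) + 2))
            - ((2 : ℚ) ^ (a - p) * (a.choose p) * ((p : ℚ) + 1)) * ((2 : ℚ) ^ (b - q) * (b.choose q) * ((q : ℚ) + 1))
              * ((2 : ℚ) ^ (c - r) * (c.choose r) * ((r : ℚ) + 1))) := by
      refine Finset.sum_congr rfl fun p hp => Finset.sum_congr rfl fun q hq =>
        Finset.sum_congr rfl fun r hr => ?_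
      have hp' : p ≤ a := Nat.lt_succ_iff.mp (Finset.mem_range.mp hp)
      have hq' : q ≤ b := Nat.lt_succ_iff.mp (Finset.mem_range.mp hq)
      have hr' : r ≤ c := Nat.lt_succ_iff.mp (Finset.mem_range.mp hr)
      rw [show a + b + c - p - q - r = (a - p) + ((b - q) + (c - r)) from by omega,
        pow_add, pow_add]
      ring
    rw [step1]
    simp only [Finset.sum_sub_distrib, ← Finset.mul_sum, ← Finset.sum_mul]
  rw [hfac, key_sum a 2, key_sum b 2, key_sum c 2, key_sum a 1, key_sum b 1, key_sum c 1]
  ring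
end

section
/- Let b ≈ 0.573 be the unique positive real root of ln 2 − 2b + ln(b+1) = 0. Then for every integer k ≥ 3 and every real α ≥ 2^k · b, the quantity ln 2 + α·ln(1 − 2^{1−k}) + ln(α/(2^k − 2) + 1) is strictly negative. -/
/-- For positive `y` and nonnegative `δ`, `log (y + δ) ≤ log y + δ / y`. -/
lemma log_add_le_aux {y δ : ℝ} (hy : 0 < y) (hδ : 0 ≤ δ) :
    Real.log (y + δ) ≤ Real.log y + δ / y := by
  have hyd : 0 < (y + δ) / y := by positivity
  have h1 : Real.log ((y + δ) / y) ≤ (y + δ) / y - 1 :=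
    Real.log_le_sub_one_of_pos hyd
  have h2 : Real.log ((y + δ) / y) = Real.log (y + δ) - Real.log y :=
    Real.log_div (by positivity) (ne_of_gt hy)
  have h3 : (y + δ) / y - 1 = δ / y := by field_simp; ring
  linarith [h1, h2.symm.le, h3.le]

/-- Quadratic upper bound on `log (1 - x)` for `0 ≤ x ≤ 1/4`. -/
lemma log_one_sub_le_aux {x : ℝ} (hx0 : 0 ≤ x) (hx : x ≤ 1/4) :
    Real.log (1 - x) ≤ -x - x^2/2 := by
  have habs : |x| < 1 := by rw [abs_of_nonneg hx0]; linarith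
  have h := Real.abs_log_sub_add_sum_range_le habs 3
  rw [abs_of_nonneg hx0] at h
  have hsum : (∑ i ∈ Finset.range 3, x ^ (i + 1) / (i + 1)) =
      x + x^2/2 + x^3/3 := by
    simp [Finset.sum_range_succ]
    ring
  rw [hsum] at h
  have h2 := abs_le.mp h
  have hx1 : (0:ℝ) < 1 - x := by linarith
  have hb : x ^ (3 + 1) / (1 - x) ≤ x^3/3 := by
    rw [div_le_div_iff₀ hx1 (by norm_num)]
    have hpow : x ^ (3 + 1) = x ^ 3 * x := by ring
    rw [hpow]
    nlinarith [mul_le_mul_of_nonneg_left hx (pow_nonneg hx0 3)]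
  linarith [h2.2]

theorem general_k_threshold (b : ℝ) (hb : 0 < b)
    (hroot : Real.log 2 - 2 * b + Real.log (b + 1) = 0)
    (k : ℕ) (hk : 3 ≤ k) (α : ℝ) (hα : 2 ^ k * b ≤ α) :
    Real.log 2 + α * Real.log (1 - (2 : ℝ) ^ (1 - (k : ℤ)))
      + Real.log (α / ((2 : ℝ) ^ k - 2) + 1) < 0 := by
  set K : ℝ := 2 ^ k with hKdef
  have hK8 : (8:ℝ) ≤ K := by
    calc (8:ℝ) = 2 ^ 3 := by norm_num
    _ ≤ 2 ^ k := by
      apply pow_le_pow_right₀ (by norm_num) hk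
  have hK0 : (0:ℝ) < K := by linarith
  have hK2 : (0:ℝ) < K - 2 := by linarith
  -- rewrite the zpow
  have hzpow : (2:ℝ) ^ (1 - (k:ℤ)) = 2 / K := by
    rw [zpow_sub₀ (by norm_num : (2:ℝ) ≠ 0), zpow_one, zpow_natCast]
  rw [hzpow]
  -- b > 1/3
  have hlog2 : (2:ℝ)/3 < Real.log 2 := by
    have := Real.log_two_gt_d9
    linarith
  have hlogb1 : 0 < Real.log (b + 1) := Real.log_pos (by linarith)
  have hb13 : 1/3 < b := by linarith
  set t : ℝ := α / K with htdef
  have ht : b ≤ t := (le_div_iff₀ hK0).mpr (by linarith [hα])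
  have ht0 : 0 < t := lt_of_lt_of_le hb ht
  have hαt : α = t * K := by rw [htdef, div_mul_cancel₀ α hK0.ne']
  -- bound on log(1 - 2/K)
  have hx0 : (0:ℝ) ≤ 2 / K := by positivity
  have hx14 : 2 / K ≤ 1/4 := by
    rw [div_le_div_iff₀ hK0 (by norm_num)]; linarith
  have h1 : Real.log (1 - 2/K) ≤ -(2/K) - (2/K)^2/2 := log_one_sub_le_aux hx0 hx14
  have hα0 : 0 < α := by rw [hαt]; positivity
  have h2 : α * Real.log (1 - 2/K) ≤ -2*t - 2*t/K := by
    calc α * Real.log (1 - 2/K) ≤ α * (-(2/K) - (2/K)^2/2) := by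
          exact mul_le_mul_of_nonneg_left h1 hα0.le
    _ = -2*t - 2*t/K := by rw [hαt]; field_simp
  -- bound on log(α/(K-2)+1)
  have h3 : α / (K - 2) + 1 = (t + 1) + 2 * t / (K - 2) := by
    rw [hαt]; field_simp; ring
  have h4 : Real.log (α / (K - 2) + 1) ≤
      Real.log (t + 1) + (2 * t / (K - 2)) / (t + 1) := by
    rw [h3]
    exact log_add_le_aux (by linarith) (by positivity)
  have h5 : Real.log (t + 1) ≤ Real.log (b + 1) + (t - b) := by
    have := log_add_le_aux (y := b + 1) (δ := t - b) (by linarith) (by linarith)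
    have h5a : (t - b) / (b + 1) ≤ t - b := by
      rw [div_le_iff₀ (by linarith)]
      nlinarith
    have h5b : b + 1 + (t - b) = t + 1 := by ring
    rw [h5b] at this
    linarith
  -- final arithmetic
  have hkey : (2 * t / (K - 2)) / (t + 1) < 2 * t / K := by
    rw [div_div, div_lt_div_iff₀ (by positivity) hK0]
    have hKt : 2 < (K - 2) * t := by
      nlinarith [mul_le_mul_of_nonneg_right (by linarith : (6:ℝ) ≤ K - 2) ht0.le]
    nlinarith [mul_pos ht0 (by linarith : (0:ℝ) < (K - 2) * t - 2)]
  have hroot' : Real.log 2 + Real.log (b + 1) = 2 * b := by linarith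
  calc Real.log 2 + α * Real.log (1 - 2/K) + Real.log (α / (K - 2) + 1)
      ≤ Real.log 2 + (-2*t - 2*t/K) + (Real.log (b + 1) + (t - b)
          + (2 * t / (K - 2)) / (t + 1)) := by linarith
    _ < Real.log 2 + (-2*t - 2*t/K) + (Real.log (b + 1) + (t - b) + 2*t/K) := by
        linarith
    _ = 2*b + (-2*t) + (t - b) := by rw [← hroot']; ring
    _ = b - t := by ring
    _ ≤ 0 := by linarith
end

section
/- For all integers k ≥ 2 and vectors of nonnegative integers (d_1, ..., d_k), the identity ∑_{I ⊆ {1,...,k}} (∏_{i∈I} d_i (2^{k-1}−1)^{d_i − 1}) · (∏_{i∉I} (2^{k-1}−1)^{d_i}) · (2^{k−|I|} − 1) = ∏_i (2^{k-1}−1)^{d_i − 1} · [∏_i (d_i + 2(2^{k-1}−1)) − ∏_i (d_i + (2^{k-1}−1))] holds, where for the left side terms with some d_i = 0 and i ∈ I are interpreted as 0 (i.e., the factor is d_i·(2^{k-1}−1)^{d_i−1} with the convention 0·x = 0). -/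
theorem nosegay_general_k_rank (k : ℕ) (hk : 2 ≤ k) (d : Fin k → ℕ) :
    ∑ I ∈ (Finset.univ : Finset (Fin k)).powerset,
        (∏ i ∈ I, (d i : ℚ) * ((2 : ℚ) ^ (k - 1) - 1) ^ ((d i : ℤ) - 1)) *
        (∏ i ∈ Iᶜ, ((2 : ℚ) ^ (k - 1) - 1) ^ (d i)) *
        ((2 : ℚ) ^ (k - I.card) - 1)
      = (∏ i, ((2 : ℚ) ^ (k - 1) - 1) ^ ((d i : ℤ) - 1)) *
        ((∏ i, ((d i : ℚ) + 2 * ((2 : ℚ) ^ (k - 1) - 1)))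
          - ∏ i, ((d i : ℚ) + ((2 : ℚ) ^ (k - 1) - 1))) := by
  set q : ℚ := (2 : ℚ) ^ (k - 1) - 1 with hq_def
  have hq1 : (1 : ℚ) ≤ q := by
    have h1 : 1 ≤ k - 1 := by omega
    have h2 : (2 : ℚ) ^ 1 ≤ (2 : ℚ) ^ (k - 1) :=
      pow_le_pow_right₀ (by norm_num) h1
    simp only [pow_one] at h2
    simp only [hq_def]; linarith
  have hq : q ≠ 0 := by linarith
  have hterm : ∀ I : Finset (Fin k),
      (∏ i ∈ I, (d i : ℚ) * q ^ ((d i : ℤ) - 1)) *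
        (∏ i ∈ Iᶜ, q ^ (d i)) * ((2 : ℚ) ^ (k - I.card) - 1)
      = (∏ i ∈ I, (d i : ℚ)) * (∏ i, q ^ ((d i : ℤ) - 1)) *
        ((2 * q) ^ (k - I.card) - q ^ (k - I.card)) := by
    intro I
    have hc : Iᶜ.card = k - I.card := by
      rw [Finset.card_compl, Fintype.card_fin]
    have h2 : ∀ i : Fin k, q ^ (d i) = q ^ ((d i : ℤ) - 1) * q := by
      intro i
      rw [← zpow_natCast q (d i), ← zpow_add_one₀ hq ((d i : ℤ) - 1),
        sub_add_cancel]
    rw [Finset.prod_mul_distrib, Finset.prod_congr rfl (fun i _ => h2 i),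
      Finset.prod_mul_distrib, Finset.prod_const, hc]
    have h3 : (∏ i ∈ I, q ^ ((d i : ℤ) - 1)) * ∏ i ∈ Iᶜ, q ^ ((d i : ℤ) - 1)
        = ∏ i, q ^ ((d i : ℤ) - 1) := Finset.prod_mul_prod_compl I _
    rw [← h3, mul_pow]
    ring
  rw [Finset.sum_congr rfl (fun I _ => hterm I), Finset.prod_add, Finset.prod_add,
    ← Finset.sum_sub_distrib, Finset.mul_sum]
  refine Finset.sum_congr rfl fun I _ => ?_
  rw [Finset.prod_const, Finset.prod_const, ← Finset.compl_eq_univ_sdiff,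
    Finset.card_compl, Fintype.card_fin]
  ring
end
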